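/- If G is a König–Egerváry graph with a perfect matching, then the critical independent sets of G are exactly the crowns of G. -/

import Mathlib

open Finset

variable {V : Type*}

namespace CrownPaper

variable [Fintype V] [DecidableEq V]

/-- The (open) neighborhood of a finite set of vertices. -/
def nbrs (G : SimpleGraph V) [DecidableRel G.Adj] (A : Finset V) : Finset V :=
  univ.filter (fun v => ∃ a ∈ A, G.Adj v a)

/-- The closed neighborhood `N[A] = A ∪ N(A)`. -/
def closedNbrs (G : SimpleGraph V) [DecidableRel G.Adj] (A : Finset V) : Finset V :=
  A ∪ nbrs G A

/-- `S` is an independent set of `G`. -/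
def IsIndep (G : SimpleGraph V) (S : Finset V) : Prop :=
  ∀ a ∈ S, ∀ b ∈ S, ¬ G.Adj a b

/-- The difference `d(S) = |S| - |N(S)|`. -/
def diff (G : SimpleGraph V) [DecidableRel G.Adj] (S : Finset V) : ℤ :=
  (S.card : ℤ) - ((nbrs G S).card : ℤ)

/-- `S` is a critical independent set. -/
def IsCritIndep (G : SimpleGraph V) [DecidableRel G.Adj] (S : Finset V) : Prop :=
  IsIndep G S ∧ ∀ I : Finset V, IsIndep G I → diff G I ≤ diff G S

/-- `S` is a crown: an independent set with a matching from `N(S)` into `S`. -/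
def IsCrown (G : SimpleGraph V) [DecidableRel G.Adj] (S : Finset V) : Prop :=
  IsIndep G S ∧ ∃ f : V → V, (∀ v ∈ nbrs G S, f v ∈ S ∧ G.Adj v (f v)) ∧
    Set.InjOn f (nbrs G S : Set V)

/-- `S` is a local maximum independent set: a maximum independent set of `G[N[S]]`. -/
def IsLocalMaxIndep (G : SimpleGraph V) [DecidableRel G.Adj] (S : Finset V) : Prop :=
  IsIndep G S ∧ ∀ I : Finset V, IsIndep G I → I ⊆ closedNbrs G S → I.card ≤ S.card

/-- The independence number. -/
noncomputable def alpha (G : SimpleGraph V) : ℕ :=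
  sSup {n | ∃ S : Finset V, IsIndep G S ∧ S.card = n}

/-- `M` is a matching of `G`, given as a finite set of (ordered) edges. -/
def IsMatching (G : SimpleGraph V) (M : Finset (V × V)) : Prop :=
  (∀ e ∈ M, G.Adj e.1 e.2) ∧
  ∀ e ∈ M, ∀ e' ∈ M, e ≠ e' →
    e.1 ≠ e'.1 ∧ e.1 ≠ e'.2 ∧ e.2 ≠ e'.1 ∧ e.2 ≠ e'.2

/-- The matching number. -/
noncomputable def mu (G : SimpleGraph V) : ℕ :=
  sSup {n | ∃ M : Finset (V × V), IsMatching G M ∧ M.card = n}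

/-- `G` has a perfect matching. -/
def HasPerfectMatching (G : SimpleGraph V) : Prop :=
  ∃ M : Finset (V × V), IsMatching G M ∧ ∀ v : V, ∃ e ∈ M, v = e.1 ∨ v = e.2

/-- `G` is a König–Egerváry graph: `α(G) + μ(G) = |V(G)|`. -/
def IsKonigEgervary (G : SimpleGraph V) : Prop :=
  alpha G + mu G = Fintype.card V

/-- `G` is bipartite. -/
def IsBipartite (G : SimpleGraph V) : Prop :=
  ∃ X : Set V, ∀ a b : V, G.Adj a b → (a ∈ X ↔ b ∉ X)

end CrownPaper


open CrownPaper

section Aux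

variable [Fintype V] [DecidableEq V]

lemma pm_card_le_nbrs (G : SimpleGraph V) [DecidableRel G.Adj]
    (hPM : HasPerfectMatching G) (I : Finset V) :
    I.card ≤ (nbrs G I).card := by
  classical
  obtain ⟨M, hM, hcov⟩ := hPM
  choose e he hve using hcov
  set p : V → V := fun v => if v = (e v).1 then (e v).2 else (e v).1 with hp
  have pdef : ∀ v, (v = (e v).1 ∧ p v = (e v).2) ∨ (v = (e v).2 ∧ p v = (e v).1) := by
    intro v
    by_cases h : v = (e v).1
    · exact Or.inl ⟨h, if_pos h⟩
    · exact Or.inr ⟨(hve v).resolve_left h, if_neg h⟩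
  have hadj : ∀ v, G.Adj v (p v) := by
    intro v
    rcases pdef v with ⟨h1, h2⟩ | ⟨h1, h2⟩
    · have h3 := hM.1 (e v) (he v)
      rw [← h1] at h3
      rw [← h2] at h3
      exact h3
    · have h3 := (hM.1 (e v) (he v)).symm
      rw [← h1] at h3
      rw [← h2] at h3
      exact h3
  have hinj : Function.Injective p := by
    intro u v huv
    have hne12u : (e u).1 ≠ (e u).2 := (hM.1 _ (he u)).ne
    by_cases hE : e u = e v
    · rcases pdef u with ⟨hu1, hu2⟩ | ⟨hu1, hu2⟩ <;>
        rcases pdef v with ⟨hv1, hv2⟩ | ⟨hv1, hv2⟩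
      · rw [hu1, hv1, hE]
      · rw [hu2, hv2, ← hE] at huv
        exact absurd huv.symm hne12u
      · rw [hu2, hv2, ← hE] at huv
        exact absurd huv hne12u
      · rw [hu1, hv1, hE]
    · obtain ⟨h1, h2, h3, h4⟩ := hM.2 _ (he u) _ (he v) hE
      rcases pdef u with ⟨hu1, hu2⟩ | ⟨hu1, hu2⟩ <;>
        rcases pdef v with ⟨hv1, hv2⟩ | ⟨hv1, hv2⟩ <;>
        rw [hu2, hv2] at huv
      · exact absurd huv h4
      · exact absurd huv h3
      · exact absurd huv h2
      · exact absurd huv h1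
  refine Finset.card_le_card_of_injOn p (fun v hv => ?_) hinj.injOn
  simp only [nbrs, mem_coe, mem_filter, mem_univ, true_and]
  exact ⟨v, hv, (hadj v).symm⟩

lemma crown_to_crit (G : SimpleGraph V) [DecidableRel G.Adj]
    (hPM : HasPerfectMatching G) (S : Finset V) (h : IsCrown G S) :
    IsCritIndep G S := by
  obtain ⟨hind, f, hf, hinj⟩ := h
  have hSle : (nbrs G S).card ≤ S.card :=
    Finset.card_le_card_of_injOn f (fun v hv => (hf v hv).1) hinj
  refine ⟨hind, fun I hI => ?_⟩
  have hIle := pm_card_le_nbrs G hPM I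
  unfold diff
  omega

lemma crit_to_crown (G : SimpleGraph V) [DecidableRel G.Adj]
    (S : Finset V) (h : IsCritIndep G S) : IsCrown G S := by
  classical
  obtain ⟨hind, hmax⟩ := h
  set t : {v // v ∈ nbrs G S} → Finset V := fun v => S.filter (fun w => G.Adj v.1 w) with ht
  have hall : ∀ s : Finset {v // v ∈ nbrs G S}, s.card ≤ (s.biUnion t).card := by
    intro s
    set T : Finset V := s.image Subtype.val with hT
    set A : Finset V := s.biUnion t with hA
    have hTcard : T.card = s.card := Finset.card_image_of_injective _ Subtype.val_injective
    have hTsub : T ⊆ nbrs G S := by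
      intro v hv
      simp only [hT, mem_image] at hv
      obtain ⟨x, _, hx⟩ := hv
      exact hx ▸ x.2
    have hAS : A ⊆ S := by
      intro w hw
      simp only [hA, mem_biUnion, ht, mem_filter] at hw
      obtain ⟨x, _, hw, _⟩ := hw
      exact hw
    have hS'ind : IsIndep G (S \ A) := fun a ha b hb =>
      hind a (mem_sdiff.mp ha).1 b (mem_sdiff.mp hb).1
    have hnb : nbrs G (S \ A) ⊆ nbrs G S \ T := by
      intro v hv
      simp only [nbrs, mem_filter, mem_univ, true_and] at hv
      obtain ⟨a, ha, hadj⟩ := hv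
      have haS : a ∈ S := (mem_sdiff.mp ha).1
      have haA : a ∉ A := (mem_sdiff.mp ha).2
      rw [mem_sdiff]
      constructor
      · simp only [nbrs, mem_filter, mem_univ, true_and]
        exact ⟨a, haS, hadj⟩
      · intro hvT
        simp only [hT, mem_image] at hvT
        obtain ⟨x, hxs, hxv⟩ := hvT
        exact haA (by
          simp only [hA, mem_biUnion]
          exact ⟨x, hxs, by simp only [ht, mem_filter]; exact ⟨haS, hxv ▸ hadj⟩⟩)
    have c1 : (nbrs G (S \ A)).card ≤ (nbrs G S).card - T.card :=
      (Finset.card_le_card hnb).trans (le_of_eq (Finset.card_sdiff_of_subset hTsub))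
    have c2 : (S \ A).card = S.card - A.card := Finset.card_sdiff_of_subset hAS
    have hTle : T.card ≤ (nbrs G S).card := Finset.card_le_card hTsub
    have hAle : A.card ≤ S.card := Finset.card_le_card hAS
    have h1 := hmax (S \ A) hS'ind
    unfold diff at h1
    omega
  obtain ⟨f, hfinj, hfmem⟩ := (Finset.all_card_le_biUnion_card_iff_exists_injective t).mp hall
  refine ⟨hind, fun v => if h : v ∈ nbrs G S then f ⟨v, h⟩ else v, fun v hv => ?_, ?_⟩
  · dsimp only
    rw [dif_pos hv]
    have := hfmem ⟨v, hv⟩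
    simp only [ht, mem_filter] at this
    exact this
  · intro u hu v hv huv
    simp only [mem_coe] at hu hv
    dsimp only at huv
    rw [dif_pos hu, dif_pos hv] at huv
    exact congrArg Subtype.val (hfinj huv)

end Aux

theorem ke_perfect_matching_crit_eq_crown (G : SimpleGraph V) [Fintype V] [DecidableEq V]
    [DecidableRel G.Adj] (hKE : IsKonigEgervary G) (hPM : HasPerfectMatching G) :
    ∀ S : Finset V, IsCritIndep G S ↔ IsCrown G S := by
  intro S
  exact ⟨fun h => crit_to_crown G S h, fun h => crown_to_crit G hPM S h⟩
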